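/- Fix n ≥ 1, 1 ≤ i ≤ n, and signs ε = (ε_0,…,ε_n) ∈ {±1}^{n+1}; let σ_ε(x_1,…,x_n) = (ε_1x_1,…,ε_nx_n) and set f_i^ε(x) := ε_0 · h_i(σ_ε x)². Define S_{ε_0} : ℝ × ℝⁿ × ℝⁿ → ℝ × ℝⁿ × ℝⁿ by S_{ε_0}(x_0, x, p) = (x_0 − ε_0 p_1²/4, x_1 + ε_0 p_1/2, x_2, …, x_n, p_1, …, p_n). Let Λ_i^ε := {(f_i^ε(x), x, −∇f_i^ε(x)) : x ∈ ℝⁿ with ε_{k−1}ε_k h_{i,k−1}(σ_ε x) ≤ 0 for k = 1,…,i}, and let L_i^{ε'} := {(x, t·∇g(x)) : t ≥ 0, x ∈ ℝⁿ with g(x) = 0 and ε_k ε_{k+1} h_{i−k}(ε_{k+1}x_{k+1},…,ε_ix_i) ≤ 0 for k = 1,…,i−1}, where g(x) := x_1 − ε_1 · h_{i−1}(ε_2x_2,…,ε_ix_i)² (the positive conormal of the hypersurface {g = 0} restricted to the quadrant). Then S_{ε_0}(Λ_i^ε) = {0} × L_i^{ε'}, and S_{ε_0} restricts to a bijection from Λ_i^ε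 onto {0} × L_i^{ε'}. In particular Λ_i^ε is independent of the sign ε_0 up to this identification. -/

import Mathlib

open scoped ContDiff

noncomputable section

/-- The polynomial `h_i` in the variables `x_1, …, x_i` (0-indexed: it depends on
coordinates `0, …, i-1`): `h_0 = 0`, `h_{i+1}(x) = x 0 - (h_i (x ∘ (·+1)))^2`. -/
def hpoly : ℕ → (ℕ → ℝ) → ℝ
  | 0, _ => 0
  | i + 1, x => x 0 - (hpoly i fun k => x (k + 1)) ^ 2

/-- Extension of a vector of `ℝⁿ` by zeros to an infinite sequence. -/
def extv {n : ℕ} (x : Fin n → ℝ) : ℕ → ℝ := fun k => if h : k < n then x ⟨k, h⟩ else 0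

/-- `h_{i,j}` as a function on `ℝⁿ` (0-indexed: it depends on coordinates `j, …, i-1`;
in the paper's notation `h_{i,j}(x) = h_{i-j}(x_{j+1}, …, x_i)`). -/
def hh (n i j : ℕ) (x : Fin n → ℝ) : ℝ := hpoly (i - j) fun k => extv x (j + k)

/-- The gradient of a function on `ℝⁿ`, via the Fréchet derivative. -/
def grad {n : ℕ} (f : (Fin n → ℝ) → ℝ) (x : Fin n → ℝ) : Fin n → ℝ :=
  fun k => fderiv ℝ f x (Pi.single k 1)

/-- The `m`-th standard basis vector of `ℝⁿ` (zero if `m ≥ n`). -/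
def evec (n m : ℕ) : Fin n → ℝ := fun k => if (k : ℕ) = m then 1 else 0

noncomputable def ezero (n : ℕ) : (Fin n → ℝ) →L[ℝ] (Fin n → ℝ) :=
  ContinuousLinearMap.pi fun j => if (j : ℕ) = 0 then 0 else ContinuousLinearMap.proj j

lemma ezero_apply {n : ℕ} (y : Fin n → ℝ) (j : Fin n) :
    ezero n y j = if (j : ℕ) = 0 then 0 else y j := by
  simp only [ezero, ContinuousLinearMap.pi_apply]
  split <;> simp

section Aux
variable {n : ℕ} (σ : (Fin n → ℝ) → (Fin n → ℝ)) (c : Fin n → ℝ)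
  (hσ : ∀ x j, σ x j = c j * x j)

include hσ

lemma extv_sigma (x : Fin n → ℝ) (j : ℕ) :
    extv (σ x) j = if h : j < n then c ⟨j, h⟩ * x ⟨j, h⟩ else 0 := by
  unfold extv; split <;> simp [hσ]

lemma aux_diff : ∀ (m j : ℕ),
    Differentiable ℝ (fun x : Fin n → ℝ => hpoly m (fun k => extv (σ x) (j + k))) := by
  intro m
  induction m with
  | zero => intro j; simpa [hpoly] using differentiable_const (0:ℝ)
  | succ m ih =>
    intro j
    have hrw : (fun x : Fin n → ℝ => hpoly (m+1) (fun k => extv (σ x) (j + k)))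
        = fun x => extv (σ x) j - (hpoly m fun k => extv (σ x) ((j+1) + k)) ^ 2 := by
      funext x
      show extv (σ x) (j + 0) - (hpoly m fun k => extv (σ x) (j + (k+1)))^2 = _
      have h2 : (fun k => extv (σ x) (j + (k+1))) = fun k => extv (σ x) ((j+1) + k) := by
        funext k; congr 1; omega
      rw [h2]
      simp only [Nat.add_zero]
    rw [hrw]
    apply Differentiable.sub
    · by_cases h : j < n
      · have : (fun x : Fin n → ℝ => extv (σ x) j) = fun x => c ⟨j, h⟩ * x ⟨j, h⟩ := by
          funext x; rw [extv_sigma σ c hσ, dif_pos h]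
        rw [this]
        exact ((ContinuousLinearMap.proj (⟨j, h⟩ : Fin n) :
          (Fin n → ℝ) →L[ℝ] ℝ).differentiable).const_mul _
      · have : (fun x : Fin n → ℝ => extv (σ x) j) = fun _ => (0:ℝ) := by
          funext x; rw [extv_sigma σ c hσ, dif_neg h]
        rw [this]; exact differentiable_const 0
    · exact (ih (j+1)).pow 2

lemma aux_congr (m j : ℕ) (hj : 1 ≤ j) (x x' : Fin n → ℝ)
    (hxx : ∀ j' : Fin n, 1 ≤ (j' : ℕ) → x' j' = x j') :
    hpoly m (fun k => extv (σ x') (j + k)) = hpoly m (fun k => extv (σ x) (j + k)) := by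
  congr 1
  funext k
  rw [extv_sigma σ c hσ, extv_sigma σ c hσ]
  split
  · next h => rw [hxx ⟨j+k, h⟩ (by simp; omega)]
  · rfl

lemma aux_grad (hn : 1 ≤ n) (m j : ℕ) (hj : 1 ≤ j) (x : Fin n → ℝ) (a : ℝ) :
    grad (fun x => hpoly m fun k => extv (σ x) (j + k)) x ⟨0, hn⟩ = 0 ∧
    ∀ k, grad (fun x => hpoly m fun k => extv (σ x) (j + k))
        (Function.update x ⟨0, hn⟩ a) k
      = grad (fun x => hpoly m fun k => extv (σ x) (j + k)) x k := by
  set C : (Fin n → ℝ) → ℝ := (fun x => hpoly m fun k => extv (σ x) (j + k)) with hC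
  have hdC : Differentiable ℝ C := aux_diff σ c hσ m j
  have hCe : ∀ y, C (ezero n y) = C y := by
    intro y
    exact aux_congr σ c hσ m j hj y (ezero n y) (fun j' hj' => by
      rw [ezero_apply, if_neg (by omega)])
  have heq : C ∘ ezero n = C := funext hCe
  have key : ∀ y (v : Fin n → ℝ), fderiv ℝ C y v = fderiv ℝ C (ezero n y) (ezero n v) := by
    intro y v
    have h1 : HasFDerivAt C ((fderiv ℝ C (ezero n y)).comp (ezero n)) y := by
      have h2 := ((hdC (ezero n y)).hasFDerivAt.comp y (ezero n).hasFDerivAt)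
      rwa [heq] at h2
    rw [h1.fderiv]; rfl
  constructor
  · show fderiv ℝ C x (Pi.single ⟨0, hn⟩ 1) = 0
    rw [key]
    have : ezero n (Pi.single (⟨0, hn⟩ : Fin n) (1:ℝ)) = 0 := by
      funext j'
      rw [ezero_apply]
      split
      · rfl
      · next h => rw [Pi.single_eq_of_ne (by simp [Fin.ext_iff]; omega) 1]; rfl
    rw [this, map_zero]
  · intro k
    show fderiv ℝ C _ (Pi.single k 1) = fderiv ℝ C x (Pi.single k 1)
    rw [key, key x]
    have : ezero n (Function.update x (⟨0, hn⟩ : Fin n) a) = ezero n x := by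
      funext j'
      rw [ezero_apply, ezero_apply]
      split
      · rfl
      · next h => rw [Function.update_of_ne (by simp [Fin.ext_iff]; omega)]
    rw [this]

end Aux

/-- Fix `n ≥ 1`, `1 ≤ i ≤ n`, signs `ε ∈ {±1}^{n+1}`, and set
`f_i^ε(x) = ε_0 h_i(σ_ε x)²`, `S_{ε_0}(x_0, x, p) = (x_0 - ε_0 p_1²/4, x_1 + ε_0 p_1/2, …, p)`.
Let `Λ_i^ε = {(f_i^ε(x), x, -∇f_i^ε(x)) : ε_{k-1}ε_k h_{i,k-1}(σ_ε x) ≤ 0 (k = 1, …, i)}` and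
`L_i^{ε'} = {(x, t∇g(x)) : t ≥ 0, g(x) = 0, ε_kε_{k+1} h_{i,k}(σ_ε x) ≤ 0 (k = 1, …, i-1)}`
where `g(x) = x_1 - ε_1 h_{i,1}(σ_ε x)²`.  Then `S_{ε_0}(Λ_i^ε) = {0} × L_i^{ε'}` and `S_{ε_0}`
restricts to a bijection from `Λ_i^ε` onto it.  (The paper's `x_1, p_1` are coordinates `0`.) -/
theorem stmt_6 (n i : ℕ) (hn : 1 ≤ n) (hi1 : 1 ≤ i) (hin : i ≤ n)
    (ε : Fin (n + 1) → ℝ) (hε : ∀ k, ε k = 1 ∨ ε k = -1)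
    (σ : (Fin n → ℝ) → (Fin n → ℝ))
    (hσ : ∀ x j, σ x j = ε ⟨(j : ℕ) + 1, Nat.succ_lt_succ j.isLt⟩ * x j)
    (f g : (Fin n → ℝ) → ℝ)
    (hf : ∀ x, f x = ε 0 * (hh n i 0 (σ x)) ^ 2)
    (hg : ∀ x, g x = x ⟨0, hn⟩ - ε ⟨1, Nat.succ_lt_succ hn⟩ * (hh n i 1 (σ x)) ^ 2)
    (S : ℝ × (Fin n → ℝ) × (Fin n → ℝ) → ℝ × (Fin n → ℝ) × (Fin n → ℝ))
    (hS : ∀ z, S z =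
      (z.1 - ε 0 * (z.2.2 ⟨0, hn⟩) ^ 2 / 4,
       Function.update z.2.1 ⟨0, hn⟩ (z.2.1 ⟨0, hn⟩ + ε 0 * z.2.2 ⟨0, hn⟩ / 2),
       z.2.2))
    (Λ : Set (ℝ × (Fin n → ℝ) × (Fin n → ℝ)))
    (hΛ : Λ = {z | ∃ x : Fin n → ℝ,
      (∀ j : ℕ, ∀ hj : j < i,
        ε ⟨j, Nat.lt_succ_of_lt (lt_of_lt_of_le hj hin)⟩ *
          ε ⟨j + 1, Nat.succ_lt_succ (lt_of_lt_of_le hj hin)⟩ * hh n i j (σ x) ≤ 0) ∧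
      z = (f x, x, fun k => - grad f x k)})
    (L : Set ((Fin n → ℝ) × (Fin n → ℝ)))
    (hL : L = {w | ∃ x : Fin n → ℝ, ∃ t : ℝ, 0 ≤ t ∧ g x = 0 ∧
      (∀ j : ℕ, 1 ≤ j → ∀ hj : j < i,
        ε ⟨j, Nat.lt_succ_of_lt (lt_of_lt_of_le hj hin)⟩ *
          ε ⟨j + 1, Nat.succ_lt_succ (lt_of_lt_of_le hj hin)⟩ * hh n i j (σ x) ≤ 0) ∧
      w = (x, fun k => t * grad g x k)}) :
    S '' Λ = {z | z.1 = 0 ∧ z.2 ∈ L} ∧ Set.InjOn S Λ := by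
  obtain ⟨m, rfl⟩ : ∃ m, i = m + 1 := ⟨i - 1, (Nat.succ_pred_eq_of_pos hi1).symm⟩
  have hn' : 0 < n := hn
  have hε0 : ∀ (h : 0 < n + 1), ε ⟨0, h⟩ = ε 0 := fun _ => rfl
  have hε1 : ∀ (h : 0 + 1 < n + 1), ε ⟨0 + 1, h⟩ = ε ⟨1, Nat.succ_lt_succ hn⟩ :=
    fun _ => rfl
  have he0 : ε 0 * ε 0 = 1 := by rcases hε 0 with h | h <;> rw [h] <;> norm_num
  have he1 : ε ⟨1, Nat.succ_lt_succ hn⟩ * ε ⟨1, Nat.succ_lt_succ hn⟩ = 1 := by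
    rcases hε ⟨1, Nat.succ_lt_succ hn⟩ with h | h <;> rw [h] <;> norm_num
  generalize he0d : ε 0 = e0 at hf hS he0 hε0
  generalize he1d : ε ⟨1, Nat.succ_lt_succ hn⟩ = e1 at hg he1 hε1
  -- differentiability
  have hdC : Differentiable ℝ (fun x : Fin n → ℝ => hh n (m+1) 1 (σ x)) :=
    aux_diff σ _ hσ m 1
  have hdF : Differentiable ℝ (fun x : Fin n → ℝ => hh n (m+1) 0 (σ x)) :=
    aux_diff σ _ hσ (m+1) 0
  -- F = e1 * x_0 - C^2
  have hFC : ∀ x : Fin n → ℝ,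
      hh n (m+1) 0 (σ x) = e1 * x ⟨0, hn⟩ - hh n (m+1) 1 (σ x) ^ 2 := by
    intro x
    show extv (σ x) (0 + 0) - (hpoly m fun k => extv (σ x) (0 + (k+1))) ^ 2 = _
    have h2 : (fun k => extv (σ x) (0 + (k+1))) = fun k => extv (σ x) (1 + k) := by
      funext k; congr 1; omega
    rw [h2]
    have h3 : extv (σ x) (0 + 0) = e1 * x ⟨0, hn⟩ := by
      rw [extv_sigma σ _ hσ, dif_pos (by omega : 0 + 0 < n)]
      rw [← he1d]
      try rfl
    rw [h3]
    try rfl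
  -- invariance under changing coordinate 0
  have hhU : ∀ (j : ℕ), 1 ≤ j → ∀ (x : Fin n → ℝ) (a : ℝ),
      hh n (m+1) j (σ (Function.update x ⟨0, hn⟩ a)) = hh n (m+1) j (σ x) := by
    intro j hj x a
    exact aux_congr σ _ hσ ((m+1)-j) j hj x _
      (fun j' h => Function.update_of_ne (by simp [Fin.ext_iff]; omega) _ _)
  have hCU : ∀ (x : Fin n → ℝ) (a : ℝ),
      hh n (m+1) 1 (σ (Function.update x ⟨0, hn⟩ a)) = hh n (m+1) 1 (σ x) :=
    fun x a => hhU 1 le_rfl x a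
  have hCg0 : ∀ x, grad (fun y => hh n (m+1) 1 (σ y)) x ⟨0, hn⟩ = 0 :=
    fun x => (aux_grad σ _ hσ hn m 1 le_rfl x 0).1
  have hCgU : ∀ x a k, grad (fun y => hh n (m+1) 1 (σ y)) (Function.update x ⟨0, hn⟩ a) k
      = grad (fun y => hh n (m+1) 1 (σ y)) x k :=
    fun x a k => (aux_grad σ _ hσ hn m 1 le_rfl x a).2 k
  -- gradient of F
  have hFg : ∀ (x : Fin n → ℝ) (k : Fin n), grad (fun y => hh n (m+1) 0 (σ y)) x k
      = e1 * (Pi.single k 1 : Fin n → ℝ) ⟨0, hn⟩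
        - 2 * hh n (m+1) 1 (σ x) * grad (fun y => hh n (m+1) 1 (σ y)) x k := by
    intro x k
    have hC' := (hdC x).hasFDerivAt
    have hlin : HasFDerivAt (fun y : Fin n → ℝ => e1 * y ⟨0, hn⟩)
        (e1 • (ContinuousLinearMap.proj (⟨0, hn⟩ : Fin n) : (Fin n → ℝ) →L[ℝ] ℝ)) x :=
      (ContinuousLinearMap.proj (⟨0, hn⟩ : Fin n) :
        (Fin n → ℝ) →L[ℝ] ℝ).hasFDerivAt.const_mul e1
    have hsq : HasFDerivAt (fun y => hh n (m+1) 1 (σ y) ^ 2)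
        (hh n (m+1) 1 (σ x) • fderiv ℝ (fun y => hh n (m+1) 1 (σ y)) x
          + hh n (m+1) 1 (σ x) • fderiv ℝ (fun y => hh n (m+1) 1 (σ y)) x) x := by
      have h := hC'.mul hC'
      have h2 : (fun y : Fin n → ℝ => hh n (m+1) 1 (σ y) * hh n (m+1) 1 (σ y))
          = fun y => hh n (m+1) 1 (σ y) ^ 2 := by funext y; ring
      simp only [Pi.mul_def, Pi.sub_def] at h
      rwa [h2] at h
    have hF' : HasFDerivAt (fun y => hh n (m+1) 0 (σ y))
        (e1 • (ContinuousLinearMap.proj (⟨0, hn⟩ : Fin n) : (Fin n → ℝ) →L[ℝ] ℝ)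
          - (hh n (m+1) 1 (σ x) • fderiv ℝ (fun y => hh n (m+1) 1 (σ y)) x
             + hh n (m+1) 1 (σ x) • fderiv ℝ (fun y => hh n (m+1) 1 (σ y)) x)) x := by
      have h := hlin.sub hsq
      have hfun : (fun y : Fin n → ℝ => e1 * y ⟨0, hn⟩ - hh n (m+1) 1 (σ y) ^ 2)
          = fun y => hh n (m+1) 0 (σ y) := by funext y; rw [hFC y]
      simp only [Pi.mul_def, Pi.sub_def] at h
      rwa [hfun] at h
    show fderiv ℝ (fun y => hh n (m+1) 0 (σ y)) x (Pi.single k 1) = _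
    rw [hF'.fderiv]
    simp only [ContinuousLinearMap.coe_sub', Pi.sub_apply, ContinuousLinearMap.add_apply,
      ContinuousLinearMap.coe_smul', Pi.smul_apply, ContinuousLinearMap.proj_apply,
      smul_eq_mul]
    show _ = e1 * (Pi.single k 1 : Fin n → ℝ) ⟨0, hn⟩
        - 2 * hh n (m+1) 1 (σ x) * fderiv ℝ (fun y => hh n (m+1) 1 (σ y)) x (Pi.single k 1)
    ring
  -- gradient of f
  have hfg : ∀ (x : Fin n → ℝ) (k : Fin n), grad f x k
      = e0 * (2 * hh n (m+1) 0 (σ x) * grad (fun y => hh n (m+1) 0 (σ y)) x k) := by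
    intro x k
    have hF' := (hdF x).hasFDerivAt
    have hsq := hF'.mul hF'
    have h2 := hsq.const_mul e0
    have hfun : (fun y : Fin n → ℝ =>
        e0 * (hh n (m+1) 0 (σ y) * hh n (m+1) 0 (σ y))) = f := by
      funext y; rw [hf y]; ring
    simp only [Pi.mul_def, Pi.sub_def] at h2
    rw [hfun] at h2
    show fderiv ℝ f x (Pi.single k 1) = _
    rw [h2.fderiv]
    simp only [ContinuousLinearMap.coe_smul', Pi.smul_apply, ContinuousLinearMap.add_apply,
      smul_eq_mul]
    show _ = e0 * (2 * hh n (m+1) 0 (σ x)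
        * fderiv ℝ (fun y => hh n (m+1) 0 (σ y)) x (Pi.single k 1))
    ring
  -- gradient of g
  have hgg : ∀ (x : Fin n → ℝ) (k : Fin n), grad g x k
      = (Pi.single k 1 : Fin n → ℝ) ⟨0, hn⟩
        - e1 * (2 * hh n (m+1) 1 (σ x) * grad (fun y => hh n (m+1) 1 (σ y)) x k) := by
    intro x k
    have hC' := (hdC x).hasFDerivAt
    have hlin : HasFDerivAt (fun y : Fin n → ℝ => y ⟨0, hn⟩)
        (ContinuousLinearMap.proj (⟨0, hn⟩ : Fin n) : (Fin n → ℝ) →L[ℝ] ℝ) x :=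
      (ContinuousLinearMap.proj (⟨0, hn⟩ : Fin n) : (Fin n → ℝ) →L[ℝ] ℝ).hasFDerivAt
    have hsq := hC'.mul hC'
    have h2 := hsq.const_mul e1
    have h := hlin.sub h2
    have hfun : (fun y : Fin n → ℝ =>
        y ⟨0, hn⟩ - e1 * (hh n (m+1) 1 (σ y) * hh n (m+1) 1 (σ y))) = g := by
      funext y; rw [hg y]; ring
    simp only [Pi.mul_def, Pi.sub_def] at h
    rw [hfun] at h
    show fderiv ℝ g x (Pi.single k 1) = _
    rw [h.fderiv]
    simp only [ContinuousLinearMap.coe_sub', Pi.sub_apply, ContinuousLinearMap.coe_smul',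
      Pi.smul_apply, ContinuousLinearMap.add_apply, ContinuousLinearMap.proj_apply,
      smul_eq_mul]
    show _ = (Pi.single k 1 : Fin n → ℝ) ⟨0, hn⟩ - e1 * (2 * hh n (m+1) 1 (σ x)
        * fderiv ℝ (fun y => hh n (m+1) 1 (σ y)) x (Pi.single k 1))
    ring
  -- derived facts
  have hFg0 : ∀ x, grad (fun y => hh n (m+1) 0 (σ y)) x ⟨0, hn⟩ = e1 := by
    intro x
    rw [hFg, hCg0]
    simp [Pi.single_eq_same]
  have hFgU : ∀ x a k, grad (fun y => hh n (m+1) 0 (σ y)) (Function.update x ⟨0, hn⟩ a) k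
      = grad (fun y => hh n (m+1) 0 (σ y)) x k := by
    intro x a k
    rw [hFg, hFg, hCU, hCgU]
  have hgF : ∀ (x : Fin n → ℝ) (k : Fin n),
      grad g x k = e1 * grad (fun y => hh n (m+1) 0 (σ y)) x k := by
    intro x k
    rw [hgg, hFg]
    linear_combination (-((Pi.single k 1 : Fin n → ℝ) ⟨0, hn⟩)) * he1
  have hfirst : ∀ y : Fin n → ℝ, f y - e0 * (-grad f y ⟨0, hn⟩) ^ 2 / 4 = 0 := by
    intro y
    rw [hf y, hfg, hFg0]
    linear_combination (-(e0 * e1^2 * hh n (m+1) 0 (σ y)^2)) * he0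
      + (-(e0 * hh n (m+1) 0 (σ y)^2)) * he1
  have hupdval : ∀ y : Fin n → ℝ,
      y ⟨0, hn⟩ + e0 * (-grad f y ⟨0, hn⟩) / 2 = e1 * hh n (m+1) 1 (σ y) ^ 2 := by
    intro y
    rw [hfg, hFg0, hFC y]
    linear_combination (e1 * hh n (m+1) 1 (σ y)^2 - e1^2 * y ⟨0, hn⟩) * he0
      + (-(y ⟨0, hn⟩)) * he1
  constructor
  · ext z
    simp only [Set.mem_image, hΛ, hL, Set.mem_setOf_eq]
    constructor
    · rintro ⟨w, ⟨x, hcon, rfl⟩, rfl⟩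
      rw [hS]
      refine ⟨hfirst x, ?_⟩
      refine ⟨Function.update x ⟨0, hn⟩
          (x ⟨0, hn⟩ + e0 * (-grad f x ⟨0, hn⟩) / 2),
        -(2 * (e0 * e1 * hh n (m+1) 0 (σ x))), ?_, ?_, ?_, ?_⟩
      · have h0 := hcon 0 (Nat.succ_pos m)
        rw [hε0, hε1] at h0
        linarith
      · rw [hg]
        rw [Function.update_self, hCU]
        rw [hupdval x]
        ring
      · intro j hj1 hj
        rw [hhU j hj1]
        exact hcon j hj
      · refine Prod.ext rfl ?_
        funext k
        show -grad f x k = -(2 * (e0 * e1 * hh n (m+1) 0 (σ x)))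
          * grad g (Function.update x ⟨0, hn⟩
              (x ⟨0, hn⟩ + e0 * (-grad f x ⟨0, hn⟩) / 2)) k
        rw [hfg, hgF, hFgU]
        linear_combination (2 * e0 * hh n (m+1) 0 (σ x)
          * grad (fun y => hh n (m+1) 0 (σ y)) x k) * he1
    · rintro ⟨hz1, x, t, ht, hgx, hcons, hz2⟩
      rw [hg] at hgx
      have hx0 : x ⟨0, hn⟩ = e1 * hh n (m+1) 1 (σ x) ^ 2 := by linarith
      set y : Fin n → ℝ := Function.update x ⟨0, hn⟩ (x ⟨0, hn⟩ - e0 * t / 2) with hy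
      have hCy : hh n (m+1) 1 (σ y) = hh n (m+1) 1 (σ x) := hCU x _
      have hFy : hh n (m+1) 0 (σ y) = -(e0 * e1 * t) / 2 := by
        rw [hFC y, hCy, hy, Function.update_self, hx0]
        linear_combination (hh n (m+1) 1 (σ x)^2) * he1
      refine ⟨(f y, y, fun k => -grad f y k), ⟨y, ?_, rfl⟩, ?_⟩
      · intro j hj
        rcases Nat.eq_zero_or_pos j with rfl | hj1
        · rw [hε0, hε1, hFy]
          have hval : e0 * e1 * (-(e0 * e1 * t) / 2) = -(t/2) := by
            linear_combination (-(t * e1^2 / 2)) * he0 + (-(t/2)) * he1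
          rw [hval]
          linarith
        · rw [hy, hhU j hj1]
          exact hcons j hj1 hj
      · rw [hS]
        have hp0 : -grad f y ⟨0, hn⟩ = t := by
          rw [hfg, hFg0, hFy]
          linear_combination (t * e1^2) * he0 + t * he1
        refine Prod.ext ?_ (Prod.ext ?_ ?_)
        · show f y - e0 * (-grad f y ⟨0, hn⟩) ^ 2 / 4 = z.1
          rw [hz1]
          exact hfirst y
        · show Function.update y ⟨0, hn⟩ (y ⟨0, hn⟩ + e0 * (-grad f y ⟨0, hn⟩) / 2) = z.2.1
          rw [hz2]
          have hval : y ⟨0, hn⟩ + e0 * (-grad f y ⟨0, hn⟩) / 2 = x ⟨0, hn⟩ := by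
            rw [hupdval y, hCy, ← hx0]
          rw [hval, hy, Function.update_idem, Function.update_eq_self]
        · show (fun k => -grad f y k) = z.2.2
          rw [hz2]
          funext k
          show -grad f y k = t * grad g x k
          rw [hfg, hFy, hgF]
          have hGy : grad (fun y' => hh n (m+1) 0 (σ y')) y k
              = grad (fun y' => hh n (m+1) 0 (σ y')) x k := by
            rw [hy]; exact hFgU x _ k
          rw [hGy]
          linear_combination (t * e1 * grad (fun y' => hh n (m+1) 0 (σ y')) x k) * he0
  · intro w1 h1 w2 h2 hS12
    rw [hΛ] at h1 h2
    obtain ⟨x1, hc1, rfl⟩ := h1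
    obtain ⟨x2, hc2, rfl⟩ := h2
    rw [hS, hS] at hS12
    simp only [Prod.mk.injEq] at hS12
    obtain ⟨hA, hB, hP⟩ := hS12
    have hgr : ∀ k, grad f x1 k = grad f x2 k := by
      intro k
      have := congrFun hP k
      simpa using this
    have hx : x1 = x2 := by
      funext k
      by_cases hk : k = ⟨0, hn⟩
      · subst hk
        have := congrFun hB ⟨0, hn⟩
        rw [Function.update_self, Function.update_self] at this
        have hg0 := hgr ⟨0, hn⟩
        rw [hg0] at this
        linarith
      · have := congrFun hB k
        rwa [Function.update_of_ne hk, Function.update_of_ne hk] at this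
    subst hx
    rfl
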